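/- arXiv:2001.00380 — 4 statements merged into one kernel-verified Lean document; each statement's English description precedes it below -/
import Mathlib

section
/- If ρ is congruent to jθ modulo one for some integer j, then the Sturmian number ξ₁ = ∑_{n≥1} s_{n-1}/bⁿ with s_n = ⌊(n+1)θ+ρ⌋ − ⌊nθ+ρ⌋ is a rational linear combination of 1 and the characteristic Sturmian number ξ₀ = ∑_{n≥1} c_n/bⁿ of the same slope θ; in particular 1, ξ₀, ξ₁ are linearly dependent over ℚ. -/
/-- The Sturmian digit at integer index `k`. -/
noncomputable def stC (θ : ℝ) (k : ℤ) : ℤ := ⌊((k : ℝ) + 1) * θ⌋ - ⌊(k : ℝ) * θ⌋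

/-- The shifted Sturmian number starting at integer index `k`. -/
noncomputable def stF (b : ℕ) (θ : ℝ) (k : ℤ) : ℝ :=
  ∑' n : ℕ, (stC θ ((n : ℤ) + k) : ℝ) / b ^ (n + 1)

lemma stC_nonneg {θ : ℝ} (h0 : 0 ≤ θ) (k : ℤ) : (0 : ℤ) ≤ stC θ k := by
  have : ⌊(k : ℝ) * θ⌋ ≤ ⌊((k : ℝ) + 1) * θ⌋ := by
    apply Int.floor_le_floor; nlinarith
  simpa [stC] using this

lemma stC_le_one {θ : ℝ} (h1 : θ ≤ 1) (k : ℤ) : stC θ k ≤ 1 := by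
  have : ⌊((k : ℝ) + 1) * θ⌋ ≤ ⌊(k : ℝ) * θ + 1⌋ := by
    apply Int.floor_le_floor; nlinarith
  rw [Int.floor_add_one] at this
  simp only [stC]; omega

lemma stF_summable {b : ℕ} (hb : 2 ≤ b) {θ : ℝ} (h0 : 0 ≤ θ) (h1 : θ ≤ 1) (k : ℤ) :
    Summable (fun n : ℕ => (stC θ ((n : ℤ) + k) : ℝ) / b ^ (n + 1)) := by
  have hb1 : (1 : ℝ) ≤ b := by exact_mod_cast Nat.one_le_of_lt hb
  have hb2 : (2 : ℝ) ≤ b := by exact_mod_cast hb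
  have hbpos : (0 : ℝ) < b := by linarith
  have hg : Summable (fun n : ℕ => ((1 : ℝ) / b) ^ (n + 1)) := by
    apply Summable.comp_injective (i := fun n : ℕ => n + 1)
    · exact summable_geometric_of_lt_one (by positivity)
        (by rw [div_lt_one hbpos]; linarith)
    · exact add_left_injective 1
  refine Summable.of_nonneg_of_le (fun n => ?_) (fun n => ?_) hg
  · have := stC_nonneg h0 ((n : ℤ) + k)
    positivity
  · rw [div_pow, one_pow]
    apply div_le_div_of_nonneg_right ?_ (by positivity)
    exact_mod_cast stC_le_one h1 ((n : ℤ) + k)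

lemma stF_rec {b : ℕ} (hb : 2 ≤ b) {θ : ℝ} (h0 : 0 ≤ θ) (h1 : θ ≤ 1) (k : ℤ) :
    stF b θ k = (stC θ k : ℝ) / b + stF b θ (k + 1) / b := by
  have hs := stF_summable hb h0 h1 k
  have h := Summable.tsum_eq_zero_add hs
  have key : (∑' n : ℕ, (stC θ (((n + 1 : ℕ) : ℤ) + k) : ℝ) / b ^ ((n + 1) + 1))
      = stF b θ (k + 1) / b := by
    rw [stF, ← tsum_div_const]
    congr 1
    ext n
    have h1 : (((n + 1 : ℕ) : ℤ) + k) = ((n : ℤ) + (k + 1)) := by push_cast; ring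
    have h2 : (b : ℝ) ^ ((n + 1) + 1) = b ^ (n + 1) * b := by ring
    rw [h1, h2, div_div]
  rw [stF, h, key]
  norm_num

lemma stF_affine {b : ℕ} (hb : 2 ≤ b) {θ : ℝ} (h0 : 0 ≤ θ) (h1 : θ ≤ 1) (k : ℤ) :
    ∃ p q : ℚ, stF b θ k = (p : ℝ) + (q : ℝ) * stF b θ 1 := by
  have hbne : (b : ℝ) ≠ 0 := by positivity
  have hbq : ((b : ℚ) : ℝ) = (b : ℝ) := by push_cast; ring
  induction k using Int.induction_on with
  | zero =>
    refine ⟨(stC θ 0 : ℚ) / b, 1 / b, ?_⟩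
    have := stF_rec hb h0 h1 0
    rw [this]
    push_cast
    ring
  | succ n ih =>
    obtain ⟨p, q, hpq⟩ := ih
    refine ⟨b * p - (stC θ n : ℚ), b * q, ?_⟩
    have h := stF_rec hb h0 h1 (n : ℤ)
    have : stF b θ ((n : ℤ) + 1) = b * stF b θ n - (stC θ n : ℝ) := by
      rw [h]; field_simp; ring
    rw [this, hpq]
    push_cast
    ring
  | pred n ih =>
    obtain ⟨p, q, hpq⟩ := ih
    refine ⟨((stC θ (-(n : ℤ) - 1) : ℚ) + p) / b, q / b, ?_⟩
    have h := stF_rec hb h0 h1 (-(n : ℤ) - 1)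
    rw [show (-(n : ℤ) - 1 + 1) = -(n : ℤ) by ring] at h
    rw [h, hpq]
    push_cast
    ring

theorem stmt_2 (b : ℕ) (hb : 2 ≤ b) (θ ρ : ℝ) (hθ : Irrational θ)
    (h0 : 0 < θ) (h1 : θ < 1) (hρ0 : 0 ≤ ρ) (hρ1 : ρ < 1)
    (hcong : ∃ j m : ℤ, ρ = j * θ + m)
    (ξ₀ ξ₁ : ℝ)
    (hξ₀ : ξ₀ = ∑' n : ℕ, ((⌊((n : ℝ) + 2) * θ⌋ - ⌊((n : ℝ) + 1) * θ⌋ : ℤ) : ℝ) / b ^ (n + 1))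
    (hξ₁ : ξ₁ = ∑' n : ℕ, ((⌊((n : ℝ) + 1) * θ + ρ⌋ - ⌊(n : ℝ) * θ + ρ⌋ : ℤ) : ℝ) / b ^ (n + 1)) :
    (∃ p q : ℚ, ξ₁ = (p : ℝ) + (q : ℝ) * ξ₀) ∧
      ¬ LinearIndependent ℚ ![(1 : ℝ), ξ₀, ξ₁] := by
  obtain ⟨j, m, hjm⟩ := hcong
  have h0' : (0 : ℝ) ≤ θ := le_of_lt h0
  have h1' : θ ≤ 1 := le_of_lt h1
  -- ξ₀ = stF b θ 1
  have e0 : ξ₀ = stF b θ 1 := by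
    rw [hξ₀, stF]
    congr 1
    ext n
    congr 2
    · congr 1 <;> push_cast <;> ring
  -- ξ₁ = stF b θ j
  have e1 : ξ₁ = stF b θ j := by
    rw [hξ₁, stF]
    congr 1
    ext n
    congr 1
    have key : ∀ x : ℝ, ⌊x * θ + ρ⌋ = ⌊(x + (j : ℝ)) * θ⌋ + m := by
      intro x
      rw [hjm, show x * θ + ((j : ℝ) * θ + (m : ℤ)) = (x + (j : ℝ)) * θ + (m : ℤ) by ring,
        Int.floor_add_intCast]
    have k1 := key ((n : ℝ) + 1)
    have k2 := key (n : ℝ)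
    have main : ⌊((n : ℝ) + 1) * θ + ρ⌋ - ⌊(n : ℝ) * θ + ρ⌋ = stC θ ((n : ℤ) + j) := by
      rw [k1, k2, stC]
      have A : ((n : ℝ) + 1 + (j : ℝ)) = ((((n : ℤ) + j : ℤ) : ℝ) + 1) := by push_cast; ring
      have B : ((n : ℝ) + (j : ℝ)) = (((n : ℤ) + j : ℤ) : ℝ) := by push_cast; ring
      rw [A, B]; ring
    exact_mod_cast main
  obtain ⟨p, q, hpq⟩ := stF_affine hb h0' h1' j
  have hmain : ξ₁ = (p : ℝ) + (q : ℝ) * ξ₀ := by rw [e1, e0, hpq]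
  refine ⟨⟨p, q, hmain⟩, ?_⟩
  intro hli
  have := Fintype.linearIndependent_iff.mp hli ![-p, -q, 1] ?_ 2
  · simp at this
  · rw [Fin.sum_univ_three]
    simp only [Matrix.cons_val_zero, Matrix.cons_val_one, Matrix.head_cons,
      Matrix.cons_val_two, Matrix.tail_cons]
    rw [Rat.smul_def, Rat.smul_def, Rat.smul_def]
    push_cast
    rw [hmain]
    ring
end

section
/- With the standard words M_k defined by M₀ = a, M₁ = a^{a₁−1}b, M_k = (M_{k−1})^{a_k} M_{k−2}, the commutation relation M_{k−1} M_k^{−−} = M_k M_{k−1}^{−−} holds for all k ≥ 3, where W^{−−} denotes W with its last two letters removed. -/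
/-- The standard words associated with a sequence of partial quotients. -/
def Mword {α : Type*} (a b : α) (aseq : ℕ → ℕ) : ℕ → List α
  | 0 => [a]
  | 1 => List.replicate (aseq 1 - 1) a ++ [b]
  | (k + 2) => (List.replicate (aseq (k + 2)) (Mword a b aseq (k + 1))).flatten ++ Mword a b aseq k

lemma flatten_replicate_comm {α : Type*} (l : List α) (n : ℕ) :
    l ++ (List.replicate n l).flatten = (List.replicate n l).flatten ++ l := by
  induction n with
  | zero => simp
  | succ n ih =>
    rw [List.replicate_succ, List.flatten_cons, List.append_assoc, ih]

lemma dropLast2_append {α : Type*} (X Y : List α) (h : 2 ≤ Y.length) :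
    (X ++ Y).dropLast.dropLast = X ++ Y.dropLast.dropLast := by
  have h1 : Y ≠ [] := by rintro rfl; simp at h
  have h2 : Y.dropLast ≠ [] := by
    intro hc
    have := (List.length_dropLast : Y.dropLast.length = Y.length - 1)
    rw [hc] at this
    simp at this
    omega
  rw [List.dropLast_append_of_ne_nil h1, List.dropLast_append_of_ne_nil h2]

lemma Mword_ne_nil {α : Type*} (a b : α) (aseq : ℕ → ℕ) (k : ℕ) :
    Mword a b aseq k ≠ [] := by
  match k with
  | 0 => simp [Mword]
  | 1 => simp [Mword]
  | k + 2 =>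
    have := Mword_ne_nil a b aseq k
    simp [Mword, this]

lemma Mword_len2 {α : Type*} (a b : α) (aseq : ℕ → ℕ)
    (hpos : ∀ i, 1 ≤ i → 1 ≤ aseq i) (k : ℕ) :
    2 ≤ (Mword a b aseq (k + 2)).length := by
  have h1 := Mword_ne_nil a b aseq (k + 1)
  have h0 := Mword_ne_nil a b aseq k
  have ha := hpos (k + 2) (by omega)
  rw [Mword]
  rw [List.length_append, List.length_flatten]
  have : (List.replicate (aseq (k + 2)) (Mword a b aseq (k + 1))).map List.length
      = List.replicate (aseq (k + 2)) (Mword a b aseq (k + 1)).length := by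
    simp
  rw [this, List.sum_replicate, smul_eq_mul]
  have l1 : 1 ≤ (Mword a b aseq (k + 1)).length := List.length_pos_iff.mpr h1
  have l0 : 1 ≤ (Mword a b aseq k).length := List.length_pos_iff.mpr h0
  nlinarith

lemma Mword_key {α : Type*} (a b : α) (aseq : ℕ → ℕ)
    (hpos : ∀ i, 1 ≤ i → 1 ≤ aseq i) (k : ℕ) :
    (Mword a b aseq (k + 1) ++ Mword a b aseq (k + 2)).dropLast.dropLast
      = (Mword a b aseq (k + 2) ++ Mword a b aseq (k + 1)).dropLast.dropLast := by
  induction k with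
  | zero =>
    set t := aseq 1 - 1 with ht
    set p := aseq 2 with hp
    have hM1 : Mword a b aseq 1 = List.replicate t a ++ [b] := rfl
    have hM2 : Mword a b aseq 2
        = (List.replicate p (Mword a b aseq 1)).flatten ++ [a] := rfl
    set F := (List.replicate p (Mword a b aseq 1)).flatten with hFdef
    have hcomm : Mword a b aseq 1 ++ F = F ++ Mword a b aseq 1 :=
      flatten_replicate_comm _ _
    calc (Mword a b aseq 1 ++ Mword a b aseq 2).dropLast.dropLast
        = (F ++ ((List.replicate t a ++ [b]) ++ [a])).dropLast.dropLast := by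
          rw [hM2, ← List.append_assoc, hcomm, List.append_assoc, hM1]
      _ = F ++ List.replicate t a := by
          rw [dropLast2_append F _ (by simp)]
          simp
      _ = F ++ ([a] ++ (List.replicate t a ++ [b])).dropLast.dropLast := by
          congr 1
          have : ([a] ++ (List.replicate t a ++ [b]) : List α)
              = (List.replicate (t + 1) a) ++ [b] := by
            simp [List.replicate_succ]
          rw [this, List.dropLast_concat, List.replicate_succ', List.dropLast_concat]
      _ = (F ++ ([a] ++ (List.replicate t a ++ [b]))).dropLast.dropLast := by
          rw [dropLast2_append F _ (by simp)]
      _ = (Mword a b aseq 2 ++ Mword a b aseq 1).dropLast.dropLast := by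
          rw [hM2, hM1, List.append_assoc]
  | succ k ih =>
    have hM3 : Mword a b aseq (k + 3)
        = (List.replicate (aseq (k + 3)) (Mword a b aseq (k + 2))).flatten
          ++ Mword a b aseq (k + 1) := rfl
    set F := (List.replicate (aseq (k + 3)) (Mword a b aseq (k + 2))).flatten with hF
    have hcomm : Mword a b aseq (k + 2) ++ F = F ++ Mword a b aseq (k + 2) :=
      flatten_replicate_comm _ _
    have h2 : 2 ≤ (Mword a b aseq (k + 2)).length := Mword_len2 a b aseq hpos k
    have h1 : 1 ≤ (Mword a b aseq (k + 1)).length :=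
      List.length_pos_iff.mpr (Mword_ne_nil a b aseq (k + 1))
    have hl : 2 ≤ (Mword a b aseq (k + 2) ++ Mword a b aseq (k + 1)).length := by
      rw [List.length_append]; omega
    have hl' : 2 ≤ (Mword a b aseq (k + 1) ++ Mword a b aseq (k + 2)).length := by
      rw [List.length_append]; omega
    calc (Mword a b aseq (k + 2) ++ Mword a b aseq (k + 3)).dropLast.dropLast
        = (F ++ (Mword a b aseq (k + 2) ++ Mword a b aseq (k + 1))).dropLast.dropLast := by
          rw [hM3, ← List.append_assoc, hcomm, List.append_assoc]
      _ = F ++ (Mword a b aseq (k + 2) ++ Mword a b aseq (k + 1)).dropLast.dropLast :=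
          dropLast2_append F _ hl
      _ = F ++ (Mword a b aseq (k + 1) ++ Mword a b aseq (k + 2)).dropLast.dropLast := by
          rw [ih]
      _ = (F ++ (Mword a b aseq (k + 1) ++ Mword a b aseq (k + 2))).dropLast.dropLast :=
          (dropLast2_append F _ hl').symm
      _ = (Mword a b aseq (k + 3) ++ Mword a b aseq (k + 2)).dropLast.dropLast := by
          rw [hM3, List.append_assoc]

theorem stmt_4 {α : Type*} (a b : α) (hab : a ≠ b) (aseq : ℕ → ℕ)
    (hpos : ∀ i, 1 ≤ i → 1 ≤ aseq i) (k : ℕ) (hk : 3 ≤ k) :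
    Mword a b aseq (k - 1) ++ (Mword a b aseq k).dropLast.dropLast
      = Mword a b aseq k ++ (Mword a b aseq (k - 1)).dropLast.dropLast := by
  obtain ⟨m, rfl⟩ : ∃ m, k = m + 3 := ⟨k - 3, by omega⟩
  have hk1 : m + 3 - 1 = (m + 1) + 1 := by omega
  rw [hk1]
  have key := Mword_key a b aseq hpos (m + 1)
  have h2 : 2 ≤ (Mword a b aseq (m + 1 + 2)).length := Mword_len2 a b aseq hpos (m + 1)
  have h1 : 2 ≤ (Mword a b aseq (m + 2)).length := Mword_len2 a b aseq hpos m
  rw [dropLast2_append _ _ h2, dropLast2_append _ _ h1] at key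
  convert key using 3 <;> omega
end

section
/- With φ as above and ξ_{y,λ} = ∑_{k≥1}(⌈y + (k+1)θ⌉ − ⌈y + kθ⌉) λᵏ, for any real y one has φ(y) = 1 + ξ_{0,λ} + ⌊y − θ⌋ − ξ_{−y,λ}. -/
/-- The value `δ(λ,θ) = (1-λ)(1 + ∑_{k≥1}(⌊(k+1)θ⌋ - ⌊kθ⌋)λᵏ)`. -/
noncomputable def deltaLT (lam θ : ℝ) : ℝ :=
  (1 - lam) * (1 + ∑' k : ℕ,
    ((⌊((k : ℝ) + 2) * θ⌋ - ⌊((k : ℝ) + 1) * θ⌋ : ℤ) : ℝ) * lam ^ (k + 1))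

/-- The function `φ(y) = δ(λ,θ)/(1-λ) + (1-λ) ∑_{k≥0} ⌊y-(k+1)θ⌋ λᵏ`. -/
noncomputable def phiLT (lam θ y : ℝ) : ℝ :=
  deltaLT lam θ / (1 - lam) + (1 - lam) * ∑' k : ℕ,
    ((⌊y - ((k : ℝ) + 1) * θ⌋ : ℤ) : ℝ) * lam ^ k

/-- The value `ξ_{y,λ} = ∑_{k≥1}(⌈y+(k+1)θ⌉ - ⌈y+kθ⌉)λᵏ`. -/
noncomputable def xiLT (lam θ y : ℝ) : ℝ :=
  ∑' k : ℕ, ((⌈y + ((k : ℝ) + 2) * θ⌉ - ⌈y + ((k : ℝ) + 1) * θ⌉ : ℤ) : ℝ) * lam ^ (k + 1)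

lemma ceil_irrational_eq (x : ℝ) (hx : Irrational x) : ⌈x⌉ = ⌊x⌋ + 1 := by
  refine le_antisymm (Int.ceil_le_floor_add_one x) ?_
  have h : (⌊x⌋ : ℝ) < x := lt_of_le_of_ne (Int.floor_le x) (Ne.symm (hx.ne_int _))
  exact Int.lt_ceil.2 h

lemma summable_affine_geo (lam : ℝ) (hl0 : 0 < lam) (hl1 : lam < 1)
    (C : ℝ) (b : ℕ → ℝ) (hb : ∀ k, |b k| ≤ C + k) :
    Summable (fun k : ℕ => b k * lam ^ k) := by
  have hnorm : ‖lam‖ < 1 := by rw [Real.norm_eq_abs, abs_of_pos hl0]; exact hl1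
  have h1 : Summable (fun k : ℕ => C * lam ^ k) :=
    (summable_geometric_of_lt_one hl0.le hl1).mul_left C
  have h2 : Summable (fun k : ℕ => (k : ℝ) * lam ^ k) := by
    have := summable_pow_mul_geometric_of_norm_lt_one 1 hnorm (R := ℝ)
    simpa using this
  refine Summable.of_norm_bounded (h1.add h2) ?_
  intro k
  have hpow : (0:ℝ) ≤ lam ^ k := pow_nonneg hl0.le k
  have : ‖b k * lam ^ k‖ = |b k| * lam ^ k := by
    rw [norm_mul, Real.norm_eq_abs, Real.norm_eq_abs, abs_of_nonneg hpow]
  rw [this]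
  calc |b k| * lam ^ k ≤ (C + k) * lam ^ k := by
        exact mul_le_mul_of_nonneg_right (hb k) hpow
    _ = C * lam ^ k + (k : ℝ) * lam ^ k := by ring

theorem stmt_12 (lam θ : ℝ) (hl0 : 0 < lam) (hl1 : lam < 1)
    (hθ : Irrational θ) (h0 : 0 < θ) (h1 : θ < 1) (y : ℝ) :
    phiLT lam θ y = 1 + xiLT lam θ 0 + (⌊y - θ⌋ : ℝ) - xiLT lam θ (-y) := by
  have hne : (1 : ℝ) - lam ≠ 0 := by linarith
  -- θ's multiples are irrational
  have hirr : ∀ k : ℕ, Irrational (((k : ℝ) + 1) * θ) := by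
    intro k
    have : ((k : ℝ) + 1) = ((k + 1 : ℤ) : ℝ) := by push_cast; ring
    rw [this]
    exact hθ.intCast_mul (by positivity)
  -- Part 1: delta part
  have hdelta : deltaLT lam θ / (1 - lam) = 1 + xiLT lam θ 0 := by
    rw [deltaLT, mul_comm, mul_div_assoc, div_self hne, mul_one]
    congr 1
    unfold xiLT
    refine tsum_congr fun k => ?_
    have e2 : ⌈(0:ℝ) + ((k : ℝ) + 2) * θ⌉ = ⌊((k : ℝ) + 2) * θ⌋ + 1 := by
      rw [zero_add]
      have h2 : ((k : ℝ) + 2) = ((k + 1 : ℕ) : ℝ) + 1 := by push_cast; ring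
      rw [h2]
      exact ceil_irrational_eq _ (hirr (k + 1))
    have e1 : ⌈(0:ℝ) + ((k : ℝ) + 1) * θ⌉ = ⌊((k : ℝ) + 1) * θ⌋ + 1 := by
      rw [zero_add]; exact ceil_irrational_eq _ (hirr k)
    rw [e2, e1]
    push_cast
    ring
  -- Part 2: Abel summation part
  set a : ℕ → ℝ := fun k => ((⌊y - ((k : ℝ) + 1) * θ⌋ : ℤ) : ℝ) with ha
  have hbound : ∀ k : ℕ, |a k| ≤ (|y| + 2) + k := by
    intro k
    have h1' : (⌊y - ((k : ℝ) + 1) * θ⌋ : ℝ) ≤ y - ((k : ℝ) + 1) * θ := Int.floor_le _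
    have h2' : y - ((k : ℝ) + 1) * θ - 1 < ⌊y - ((k : ℝ) + 1) * θ⌋ := Int.sub_one_lt_floor _
    have hy1 : -|y| ≤ y := neg_abs_le y
    have hy2 : y ≤ |y| := le_abs_self y
    have hk : (0:ℝ) ≤ k := Nat.cast_nonneg k
    have hθk : 0 ≤ ((k:ℝ)+1) * θ := by positivity
    have hθk2 : ((k:ℝ)+1) * θ ≤ ((k:ℝ)+1) * 1 := by
      apply mul_le_mul_of_nonneg_left h1.le; linarith
    rw [abs_le]
    constructor <;> simp only [ha] <;> nlinarith
  have hS : Summable (fun k : ℕ => a k * lam ^ k) :=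
    summable_affine_geo lam hl0 hl1 (|y| + 2) a hbound
  set S : ℝ := ∑' k : ℕ, a k * lam ^ k with hSdef
  -- shifted sums
  have hshift : S = a 0 + ∑' k : ℕ, a (k + 1) * lam ^ (k + 1) := by
    have := hS.tsum_eq_zero_add
    simpa using this
  have hSmul : ∑' k : ℕ, a k * lam ^ (k + 1) = lam * S := by
    rw [hSdef, ← tsum_mul_left]
    exact tsum_congr fun k => by ring
  have hsum1 : Summable (fun k : ℕ => a (k + 1) * lam ^ (k + 1)) := by
    have := (summable_nat_add_iff 1).2 hS
    simpa using this
  have hsum2 : Summable (fun k : ℕ => a k * lam ^ (k + 1)) := by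
    have := hS.mul_left lam
    refine this.congr fun k => ?_
    ring
  -- xi (-y) identification
  have hxi : xiLT lam θ (-y) = ∑' k : ℕ, (a k - a (k + 1)) * lam ^ (k + 1) := by
    unfold xiLT
    refine tsum_congr fun k => ?_
    have e2 : ⌈-y + ((k : ℝ) + 2) * θ⌉ = -⌊y - ((k : ℝ) + 2) * θ⌋ := by
      rw [show -y + ((k : ℝ) + 2) * θ = -(y - ((k : ℝ) + 2) * θ) by ring, Int.ceil_neg]
    have e1 : ⌈-y + ((k : ℝ) + 1) * θ⌉ = -⌊y - ((k : ℝ) + 1) * θ⌋ := by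
      rw [show -y + ((k : ℝ) + 1) * θ = -(y - ((k : ℝ) + 1) * θ) by ring, Int.ceil_neg]
    rw [e2, e1]
    have : a (k + 1) = ((⌊y - ((k : ℝ) + 2) * θ⌋ : ℤ) : ℝ) := by
      simp only [ha]
      norm_num
      ring_nf
    rw [this, ha]
    push_cast
    ring
  have hxi2 : xiLT lam θ (-y) = lam * S - (S - a 0) := by
    rw [hxi]
    have : (fun k : ℕ => (a k - a (k + 1)) * lam ^ (k + 1))
        = fun k : ℕ => a k * lam ^ (k + 1) - a (k + 1) * lam ^ (k + 1) := by
      funext k; ring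
    rw [this, hsum2.tsum_sub hsum1, hSmul]
    have : ∑' k : ℕ, a (k + 1) * lam ^ (k + 1) = S - a 0 := by
      rw [hshift]; ring
    rw [this]
  -- a 0 = ⌊y - θ⌋
  have ha0 : a 0 = ((⌊y - θ⌋ : ℤ) : ℝ) := by
    simp [ha]
  -- conclude
  rw [phiLT, hdelta, ← hSdef, hxi2, ha0]
  ring
end

section
/- With φ as above, for every integer l ≥ 1: φ({−lθ}) = ((1−λ^{−l})/(1−λ)) δ(λ,θ) + λ^{−l} + ∑_{k=1}^{l−1} λ^{k−l}(⌊(k+1)θ⌋ − ⌊kθ⌋). -/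
lemma floor_neg_irr (x : ℝ) (hx : Irrational x) : ⌊-x⌋ = -⌊x⌋ - 1 := by
  have h1 : (⌊x⌋ : ℝ) < x := lt_of_le_of_ne (Int.floor_le x) (Ne.symm (hx.ne_int ⌊x⌋))
  have h2 : x < ⌊x⌋ + 1 := Int.lt_floor_add_one x
  rw [Int.floor_eq_iff]
  constructor <;> push_cast <;> linarith

theorem stmt_13 (lam θ : ℝ) (hl0 : 0 < lam) (hl1 : lam < 1)
    (hθ : Irrational θ) (h0 : 0 < θ) (h1 : θ < 1) (l : ℕ) (hl : 1 ≤ l) :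
    phiLT lam θ (Int.fract (-(l : ℝ) * θ))
      = (1 - lam ^ (-(l : ℤ))) / (1 - lam) * deltaLT lam θ + lam ^ (-(l : ℤ))
        + ∑ k ∈ Finset.Icc 1 (l - 1),
            lam ^ ((k : ℤ) - (l : ℤ))
              * ((⌊((k : ℝ) + 1) * θ⌋ - ⌊(k : ℝ) * θ⌋ : ℤ) : ℝ) := by
  have hlam_ne : lam ≠ 0 := hl0.ne'
  have h1l : (1 : ℝ) - lam ≠ 0 := by linarith
  -- the increment sequence
  set b : ℕ → ℝ := fun k => ((⌊((k : ℝ) + 1) * θ⌋ - ⌊(k : ℝ) * θ⌋ : ℤ) : ℝ) with hbdef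
  have hb0 : ∀ k, 0 ≤ b k := by
    intro k
    have h : ⌊(k : ℝ) * θ⌋ ≤ ⌊((k : ℝ) + 1) * θ⌋ := by
      apply Int.floor_le_floor; nlinarith
    have h2 : (0 : ℤ) ≤ ⌊((k : ℝ) + 1) * θ⌋ - ⌊(k : ℝ) * θ⌋ := by omega
    simp only [hbdef]
    exact_mod_cast h2
  have hb1 : ∀ k, b k ≤ 1 := by
    intro k
    have h : ⌊((k : ℝ) + 1) * θ⌋ ≤ ⌊(k : ℝ) * θ + 1⌋ := by
      apply Int.floor_le_floor; nlinarith
    rw [Int.floor_add_one] at h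
    have h2 : ⌊((k : ℝ) + 1) * θ⌋ - ⌊(k : ℝ) * θ⌋ ≤ (1 : ℤ) := by omega
    simp only [hbdef]
    exact_mod_cast h2
  have hθf : ⌊θ⌋ = 0 := Int.floor_eq_zero_iff.2 (Set.mem_Ico.2 ⟨h0.le, h1⟩)
  have hbz : b 0 = 0 := by
    simp [hbdef, hθf]
  have hgeo : Summable (fun k : ℕ => lam ^ k) := summable_geometric_of_lt_one hl0.le hl1
  have hsum : ∀ m : ℕ, Summable (fun k : ℕ => b (m + k) * lam ^ k) := by
    intro m
    apply Summable.of_nonneg_of_le (fun k => mul_nonneg (hb0 _) (pow_nonneg hl0.le k))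
      (fun k => ?_) hgeo
    calc b (m + k) * lam ^ k ≤ 1 * lam ^ k := by
          apply mul_le_mul_of_nonneg_right (hb1 _) (pow_nonneg hl0.le k)
      _ = lam ^ k := one_mul _
  have hF : Summable (fun k : ℕ => b k * lam ^ k) := by simpa using hsum 0
  set A : ℝ := ∑' k : ℕ, b (k + 1) * lam ^ (k + 1) with hAdef
  set T : ℝ := ∑' k : ℕ, b (l + k) * lam ^ k with hTdef
  -- delta in terms of A
  have hdelta : deltaLT lam θ = (1 - lam) * (1 + A) := by
    unfold deltaLT
    congr 2
    apply tsum_congr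
    intro k
    simp only [hbdef]
    push_cast
    ring_nf
  -- floor computation at fract(-lθ)
  have hfloor : ∀ k : ℕ, ⌊Int.fract (-(l : ℝ) * θ) - ((k : ℝ) + 1) * θ⌋
      = ⌊(l : ℝ) * θ⌋ - ⌊((l + k + 1 : ℕ) : ℝ) * θ⌋ := by
    intro k
    have hirr : ∀ m : ℕ, 1 ≤ m → Irrational ((m : ℝ) * θ) := fun m hm =>
      hθ.natCast_mul (by omega)
    have e1 : Int.fract (-(l : ℝ) * θ) - ((k : ℝ) + 1) * θ
        = -(((l + k + 1 : ℕ) : ℝ) * θ) - (⌊-(l : ℝ) * θ⌋ : ℤ) := by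
      rw [Int.fract]; push_cast; ring
    rw [e1, Int.floor_sub_intCast]
    have e2 : ⌊-(l : ℝ) * θ⌋ = -⌊(l : ℝ) * θ⌋ - 1 := by
      rw [show -(l : ℝ) * θ = -((l : ℝ) * θ) by ring]
      exact floor_neg_irr _ (hirr l hl)
    rw [floor_neg_irr _ (hirr (l + k + 1) (by omega)), e2]
    ring
  -- telescoping
  have htel : ∀ k : ℕ, ((⌊((l + k + 1 : ℕ) : ℝ) * θ⌋ - ⌊(l : ℝ) * θ⌋ : ℤ) : ℝ)
      = ∑ j ∈ Finset.range (k + 1), b (l + j) := by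
    intro k
    induction k with
    | zero =>
      simp only [hbdef]
      rw [show (0 : ℕ) + 1 = 1 from rfl, Finset.sum_range_one]
      push_cast
      ring_nf
    | succ n ih =>
      rw [Finset.sum_range_succ, ← ih]
      simp only [hbdef]
      push_cast
      ring_nf
  -- Cauchy product identity
  have hcauchy : ∑' n : ℕ, (∑ j ∈ Finset.range (n + 1), b (l + j)) * lam ^ n
      = T * (1 - lam)⁻¹ := by
    rw [hTdef, ← tsum_geometric_of_lt_one hl0.le hl1]
    rw [tsum_mul_tsum_eq_tsum_sum_range_of_summable_norm
      (f := fun k => b (l + k) * lam ^ k) (g := fun k => lam ^ k)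
      (by
        apply Summable.of_nonneg_of_le (fun k => norm_nonneg _) (fun k => ?_) hgeo
        rw [Real.norm_eq_abs, abs_of_nonneg (mul_nonneg (hb0 _) (pow_nonneg hl0.le k))]
        calc b (l + k) * lam ^ k ≤ 1 * lam ^ k :=
              mul_le_mul_of_nonneg_right (hb1 _) (pow_nonneg hl0.le k)
          _ = lam ^ k := one_mul _)
      (by
        apply Summable.of_nonneg_of_le (fun k => norm_nonneg _) (fun k => ?_) hgeo
        rw [Real.norm_eq_abs, abs_of_nonneg (pow_nonneg hl0.le k)])]
    apply tsum_congr
    intro n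
    rw [Finset.sum_mul]
    apply Finset.sum_congr rfl
    intro j hj
    have hjn : j ≤ n := by simpa [Nat.lt_succ_iff] using hj
    rw [mul_assoc, ← pow_add, Nat.add_sub_cancel' hjn]
  -- phi value
  have hphi : phiLT lam θ (Int.fract (-(l : ℝ) * θ)) = 1 + A - T := by
    unfold phiLT
    rw [hdelta]
    have e : ∑' k : ℕ, ((⌊Int.fract (-(l : ℝ) * θ) - ((k : ℝ) + 1) * θ⌋ : ℤ) : ℝ) * lam ^ k
        = -(T * (1 - lam)⁻¹) := by
      rw [← hcauchy, ← tsum_neg]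
      apply tsum_congr
      intro k
      rw [hfloor k]
      have : ((⌊(l : ℝ) * θ⌋ - ⌊((l + k + 1 : ℕ) : ℝ) * θ⌋ : ℤ) : ℝ)
          = -((⌊((l + k + 1 : ℕ) : ℝ) * θ⌋ - ⌊(l : ℝ) * θ⌋ : ℤ) : ℝ) := by push_cast; ring
      rw [this, htel k]
      ring
    rw [e]
    field_simp
    ring
  -- split of A
  have hsplit : A = ∑ i ∈ Finset.range l, b i * lam ^ i + lam ^ l * T := by
    have h0' : ∑' k : ℕ, b k * lam ^ k = A := by
      rw [hF.tsum_eq_zero_add, hbz]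
      simp [hAdef]
    rw [← h0', ← hF.sum_add_tsum_nat_add l]
    congr 1
    rw [hTdef, ← tsum_mul_left]
    apply tsum_congr
    intro k
    rw [show k + l = l + k from Nat.add_comm k l, pow_add]
    ring
  -- finite sum manipulation
  have hfin : ∑ k ∈ Finset.Icc 1 (l - 1),
      lam ^ ((k : ℤ) - (l : ℤ)) * ((⌊((k : ℝ) + 1) * θ⌋ - ⌊(k : ℝ) * θ⌋ : ℤ) : ℝ)
      = (lam ^ l)⁻¹ * (A - lam ^ l * T) := by
    have hIcc : Finset.Icc 1 (l - 1) = Finset.Ico 1 l := by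
      rw [← Finset.Ico_add_one_right_eq_Icc]
      congr 1
      omega
    have hrange : ∑ i ∈ Finset.range l, b i * lam ^ i
        = ∑ k ∈ Finset.Ico 1 l, b k * lam ^ k := by
      rw [Finset.range_eq_Ico, Finset.sum_eq_sum_Ico_succ_bot (by omega)]
      simp [hbz]
    rw [hIcc]
    have : ∀ k ∈ Finset.Ico 1 l,
        lam ^ ((k : ℤ) - (l : ℤ)) * ((⌊((k : ℝ) + 1) * θ⌋ - ⌊(k : ℝ) * θ⌋ : ℤ) : ℝ)
        = (lam ^ l)⁻¹ * (b k * lam ^ k) := by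
      intro k _
      rw [zpow_sub₀ hlam_ne, zpow_natCast, zpow_natCast]
      simp only [hbdef]
      field_simp
    rw [Finset.sum_congr rfl this, ← Finset.mul_sum, ← hrange]
    congr 1
    linarith [hsplit]
  have hzl : lam ^ (-(l : ℤ)) = (lam ^ l)⁻¹ := by
    rw [zpow_neg, zpow_natCast]
  rw [hphi, hfin, hzl, hdelta]
  have hpl : (lam ^ l : ℝ) ≠ 0 := pow_ne_zero _ hlam_ne
  field_simp
  ring
end
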